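/- The formal power series F(x) = Σ_{n≥1} A_n(s,t) x^n and I⁺(x) = Σ_{n≥1} B⁺_n(s,t) x^n, with coefficients in ℚ(s,t) (or ℚ[s,t]), satisfy F = I⁺·(1 + F); equivalently, I⁺ = F/(1+F). In coefficient form: for every n ≥ 1, A_n(s,t) = B⁺_n(s,t) + Σ_{k=1}^{n−1} B⁺_k(s,t) A_{n−k}(s,t). -/

import Mathlib

/-- The number of descents of a permutation of `Fin n`. -/
def des {n : ℕ} (π : Equiv.Perm (Fin n)) : ℕ :=
  (Finset.univ.filter (fun p : Fin n × Fin n =>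
    (p.2 : ℕ) = (p.1 : ℕ) + 1 ∧ π p.2 < π p.1)).card

/-- The number of descents of the inverse permutation. -/
def ides {n : ℕ} (π : Equiv.Perm (Fin n)) : ℕ := des π⁻¹

/-- `σ` can be written as a direct sum `π ⊕ τ` of two (nonempty) permutations:
there is `0 < m < n` such that the first `m` positions carry the values `0,…,m-1`. -/
def SumDecomposable {n : ℕ} (σ : Equiv.Perm (Fin n)) : Prop :=
  ∃ m : ℕ, 0 < m ∧ m < n ∧ ∀ i : Fin n, (i : ℕ) < m → (σ i : ℕ) < m

open MvPolynomial

/-- The two-sided Eulerian polynomial `A_n(s,t)` (`s = X 0`, `t = X 1`). -/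
noncomputable def twoSidedEulerian (n : ℕ) : MvPolynomial (Fin 2) ℤ :=
  ∑ π : Equiv.Perm (Fin n), (X 0) ^ des π * (X 1) ^ ides π

open scoped Classical in
/-- The two-sided descent polynomial `B⁺_n(s,t)` of the sum-indecomposable
permutations of length `n`. -/
noncomputable def sumIndecPoly (n : ℕ) : MvPolynomial (Fin 2) ℤ :=
  ∑ π ∈ Finset.univ.filter (fun π : Equiv.Perm (Fin n) => ¬ SumDecomposable π),
    (X 0) ^ des π * (X 1) ^ ides π

namespace Aux
open Finset Equiv

variable {n k m : ℕ}

/-- extension of σ to ℕ. -/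
def fval (σ : Equiv.Perm (Fin n)) (i : ℕ) : ℕ := if h : i < n then (σ ⟨i, h⟩ : ℕ) else i

/-- descent set as a finset of ℕ. -/
def D (σ : Equiv.Perm (Fin n)) : Finset ℕ :=
  (Finset.range n).filter fun i => i + 1 < n ∧ fval σ (i+1) < fval σ i

lemma fval_lt (σ : Equiv.Perm (Fin n)) {i : ℕ} (h : i < n) : fval σ i < n := by
  simp [fval, h]

lemma des_eq (σ : Equiv.Perm (Fin n)) : des σ = (D σ).card := by
  unfold des D
  apply Finset.card_bij (fun p _ => ((p : Fin n × Fin n).1 : ℕ))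
  · rintro ⟨a, b⟩ hp
    simp only [mem_filter, mem_univ, true_and] at hp ⊢
    obtain ⟨h1, h2⟩ := hp
    have hb := b.isLt
    refine ⟨mem_range.mpr a.isLt, by omega, ?_⟩
    have ha1 : (a : ℕ) + 1 < n := by omega
    have : fval σ ((a : ℕ) + 1) = (σ b : ℕ) := by
      simp only [fval, dif_pos ha1]
      congr 1
      ext
      simp [h1.symm]
    rw [this]
    have : fval σ (a : ℕ) = (σ a : ℕ) := by
      simp only [fval, dif_pos a.isLt]
    rw [this]
    exact h2
  · rintro ⟨a, b⟩ ha ⟨c, d⟩ hc h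
    simp only [mem_filter, mem_univ, true_and] at ha hc
    have : a = c := Fin.ext h
    subst this
    have : b = d := Fin.ext (by omega)
    subst this; rfl
  · intro i hi
    simp only [mem_filter, mem_range] at hi
    obtain ⟨h1, h2, h3⟩ := hi
    refine ⟨(⟨i, h1⟩, ⟨i+1, h2⟩), ?_, rfl⟩
    simp only [mem_filter, mem_univ, true_and]
    simpa [fval, h1, h2] using h3


/-- direct sum of permutations. -/
def join (π : Equiv.Perm (Fin k)) (τ : Equiv.Perm (Fin m)) : Equiv.Perm (Fin (k + m)) :=
  finSumFinEquiv.permCongr (Equiv.sumCongr π τ)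

lemma join_apply_castAdd (π : Equiv.Perm (Fin k)) (τ : Equiv.Perm (Fin m)) (i : Fin k) :
    join π τ (Fin.castAdd m i) = Fin.castAdd m (π i) := by
  simp [join, Equiv.permCongr_apply, ← finSumFinEquiv_apply_left]

lemma join_apply_natAdd (π : Equiv.Perm (Fin k)) (τ : Equiv.Perm (Fin m)) (j : Fin m) :
    join π τ (Fin.natAdd k j) = Fin.natAdd k (τ j) := by
  simp [join, Equiv.permCongr_apply, ← finSumFinEquiv_apply_right]

lemma join_fval_lt (π : Equiv.Perm (Fin k)) (τ : Equiv.Perm (Fin m)) {i : ℕ} (h : i < k) :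
    fval (join π τ) i = fval π i := by
  have hik : i < k + m := by omega
  have : (⟨i, hik⟩ : Fin (k+m)) = Fin.castAdd m ⟨i, h⟩ := rfl
  simp only [fval, dif_pos hik, dif_pos h, this, join_apply_castAdd]
  rfl

lemma join_fval_ge (π : Equiv.Perm (Fin k)) (τ : Equiv.Perm (Fin m)) {j : ℕ} (h : j < m) :
    fval (join π τ) (k + j) = k + fval τ j := by
  have hik : k + j < k + m := by omega
  have : (⟨k + j, hik⟩ : Fin (k+m)) = Fin.natAdd k ⟨j, h⟩ := rfl
  simp only [fval, dif_pos hik, dif_pos h, this, join_apply_natAdd]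
  rfl

lemma join_inv (π : Equiv.Perm (Fin k)) (τ : Equiv.Perm (Fin m)) :
    (join π τ)⁻¹ = join π⁻¹ τ⁻¹ := by
  refine Equiv.ext fun x => ?_
  rcases finSumFinEquiv.surjective x with ⟨y, rfl⟩
  rcases y with i | j
  · rw [finSumFinEquiv_apply_left, join_apply_castAdd, Equiv.Perm.inv_eq_iff_eq,
      join_apply_castAdd, ← Equiv.Perm.mul_apply, mul_inv_cancel, Equiv.Perm.one_apply]
  · rw [finSumFinEquiv_apply_right, join_apply_natAdd, Equiv.Perm.inv_eq_iff_eq,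
      join_apply_natAdd, ← Equiv.Perm.mul_apply, mul_inv_cancel, Equiv.Perm.one_apply]

lemma D_join (π : Equiv.Perm (Fin k)) (τ : Equiv.Perm (Fin m)) :
    D (join π τ) = D π ∪ (D τ).image (· + k) := by
  ext i
  simp only [D, mem_union, mem_image, mem_filter, mem_range]
  constructor
  · rintro ⟨h1, h2, h3⟩
    by_cases hik : i + 1 < k
    · left
      rw [join_fval_lt π τ (show i + 1 < k by omega), join_fval_lt π τ (show i < k by omega)] at h3
      exact ⟨by omega, hik, h3⟩
    · by_cases hik2 : i + 1 = k
      · exfalso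
        rw [join_fval_lt π τ (show i < k by omega)] at h3
        have h4 : fval π i < k := fval_lt π (by omega)
        have h5 : i + 1 = k + 0 := by omega
        rw [h5, join_fval_ge π τ (show 0 < m by omega)] at h3
        omega
      · -- i ≥ k
        right
        have hik3 : k ≤ i := by omega
        obtain ⟨j, rfl⟩ : ∃ j, i = k + j := ⟨i - k, by omega⟩
        refine ⟨j, ⟨by omega, by omega, ?_⟩, by omega⟩
        have h5 : k + j + 1 = k + (j + 1) := by omega
        rw [h5, join_fval_ge π τ (show j + 1 < m by omega), join_fval_ge π τ (show j < m by omega)] at h3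
        omega
  · rintro (⟨h1, h2, h3⟩ | ⟨j, ⟨h1, h2, h3⟩, rfl⟩)
    · rw [← join_fval_lt π τ (by omega : i + 1 < k), ← join_fval_lt π τ (by omega : i < k)] at h3
      exact ⟨by omega, by omega, h3⟩
    · refine ⟨by omega, by omega, ?_⟩
      have h5 : j + k + 1 = k + (j + 1) := by omega
      rw [h5, join_fval_ge π τ (show j + 1 < m by omega)]
      have h6 : j + k = k + j := by omega
      rw [h6, join_fval_ge π τ (show j < m by omega)]
      omega

lemma des_join (π : Equiv.Perm (Fin k)) (τ : Equiv.Perm (Fin m)) :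
    des (join π τ) = des π + des τ := by
  rw [des_eq, des_eq, des_eq, D_join]
  rw [Finset.card_union_of_disjoint, Finset.card_image_of_injective _ (add_left_injective k)]
  rw [Finset.disjoint_left]
  rintro a ha hb
  simp only [D, mem_filter, mem_range, mem_image] at ha hb
  obtain ⟨j, hj, rfl⟩ := hb
  omega

lemma ides_join (π : Equiv.Perm (Fin k)) (τ : Equiv.Perm (Fin m)) :
    ides (join π τ) = ides π + ides τ := by
  unfold ides
  rw [join_inv, des_join]


def closedAt (j : ℕ) (σ : Equiv.Perm (Fin n)) : Prop :=
  ∀ i : Fin n, (i : ℕ) < j → (σ i : ℕ) < j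

lemma closedAt_self (σ : Equiv.Perm (Fin n)) : closedAt n σ := fun i _ => (σ i).isLt

lemma closedAt_join_iff (π : Equiv.Perm (Fin k)) (τ : Equiv.Perm (Fin m)) {j : ℕ} (hj : j ≤ k) :
    closedAt j (join π τ) ↔ closedAt j π := by
  constructor
  · intro h i hi
    have hik : (i : ℕ) < k + m := by omega
    have h2 := h ⟨i, hik⟩ hi
    have : (⟨(i : ℕ), hik⟩ : Fin (k+m)) = Fin.castAdd m i := by ext; rfl
    rw [this, join_apply_castAdd] at h2
    exact h2
  · intro h i hi
    have hik : (i : ℕ) < k := by omega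
    have : i = Fin.castAdd m ⟨(i : ℕ), hik⟩ := by ext; rfl
    rw [this, join_apply_castAdd]
    exact h ⟨(i : ℕ), hik⟩ hi

lemma closedAt_join (π : Equiv.Perm (Fin k)) (τ : Equiv.Perm (Fin m)) :
    closedAt k (join π τ) := (closedAt_join_iff π τ le_rfl).mpr fun i hi => (π i).isLt

lemma natAdd_inj {a b : Fin m} (h : Fin.natAdd k a = Fin.natAdd k b) : a = b := by
  have hv := congrArg Fin.val h
  simp only [Fin.coe_natAdd] at hv
  exact Fin.ext (by omega)

lemma join_injective {π π' : Equiv.Perm (Fin k)} {τ τ' : Equiv.Perm (Fin m)}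
    (h : join π τ = join π' τ') : π = π' ∧ τ = τ' := by
  constructor
  · refine Equiv.ext fun i => ?_
    have := congrArg (fun σ : Equiv.Perm (Fin (k+m)) => σ (Fin.castAdd m i)) h
    simp only [join_apply_castAdd] at this
    exact Fin.castAdd_injective _ _ this
  · refine Equiv.ext fun j => ?_
    have := congrArg (fun σ : Equiv.Perm (Fin (k+m)) => σ (Fin.natAdd k j)) h
    simp only [join_apply_natAdd] at this
    exact natAdd_inj this

lemma join_surjective {σ : Equiv.Perm (Fin (k + m))} (h : closedAt k σ) :
    ∃ π τ, σ = join π τ := by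
  -- σ maps values < k to values < k, bijectively
  have hmaps : ∀ i : Fin k, (σ (Fin.castAdd m i) : ℕ) < k := fun i => h _ i.isLt
  set f : Fin k → Fin k := fun i => ⟨(σ (Fin.castAdd m i) : ℕ), hmaps i⟩ with hf
  have hfinj : Function.Injective f := by
    intro a b hab
    have hv : (σ (Fin.castAdd m a) : ℕ) = (σ (Fin.castAdd m b) : ℕ) := by
      have := congrArg Fin.val hab
      simpa [hf] using this
    exact Fin.castAdd_injective _ _ (σ.injective (Fin.ext hv))
  have hfbij : Function.Bijective f := (Finite.injective_iff_bijective).mp hfinj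
  -- values at positions ≥ k are ≥ k
  have hge : ∀ j : Fin m, k ≤ (σ (Fin.natAdd k j) : ℕ) := by
    intro j
    by_contra hc
    push_neg at hc
    obtain ⟨i, hi⟩ := hfbij.surjective ⟨(σ (Fin.natAdd k j) : ℕ), hc⟩
    have hv : (σ (Fin.castAdd m i) : ℕ) = (σ (Fin.natAdd k j) : ℕ) := by
      have := congrArg Fin.val hi
      simpa [hf] using this
    have h2 := σ.injective (Fin.ext hv)
    have : (Fin.castAdd m i : ℕ) = (Fin.natAdd k j : ℕ) := congrArg Fin.val h2
    simp [Fin.castAdd, Fin.natAdd] at this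
    omega
  set g : Fin m → Fin m := fun j => ⟨(σ (Fin.natAdd k j) : ℕ) - k, by
    have := (σ (Fin.natAdd k j)).isLt
    have := hge j
    omega⟩ with hg
  have hginj : Function.Injective g := by
    intro a b hab
    have hva := hge a
    have hvb := hge b
    have : (σ (Fin.natAdd k a) : ℕ) = (σ (Fin.natAdd k b) : ℕ) := by
      have := congrArg Fin.val hab
      simp only [hg] at this
      omega
    exact natAdd_inj (σ.injective (Fin.ext this))
  have hgbij : Function.Bijective g := (Finite.injective_iff_bijective).mp hginj
  refine ⟨Equiv.ofBijective f hfbij, Equiv.ofBijective g hgbij, ?_⟩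
  refine Equiv.ext fun x => ?_
  rcases finSumFinEquiv.surjective x with ⟨y, rfl⟩
  rcases y with i | j
  · rw [finSumFinEquiv_apply_left, join_apply_castAdd]
    apply Fin.ext
    simp [Equiv.ofBijective, hf, Fin.castAdd]
  · rw [finSumFinEquiv_apply_right, join_apply_natAdd]
    apply Fin.ext
    have := hge j
    simp only [Equiv.ofBijective, Equiv.coe_fn_mk, hg, Fin.coe_natAdd]
    omega


lemma sumDecomposable_iff (π : Equiv.Perm (Fin k)) :
    SumDecomposable π ↔ ∃ j, 0 < j ∧ j < k ∧ closedAt j π := Iff.rfl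

noncomputable def minClosed (σ : Equiv.Perm (Fin n)) : ℕ :=
  sInf {j | 0 < j ∧ closedAt j σ}

lemma minClosed_le {σ : Equiv.Perm (Fin n)} {j : ℕ} (h1 : 0 < j) (h2 : closedAt j σ) :
    minClosed σ ≤ j := Nat.sInf_le ⟨h1, h2⟩

lemma minClosed_mem (hn : 0 < n) (σ : Equiv.Perm (Fin n)) :
    0 < minClosed σ ∧ closedAt (minClosed σ) σ :=
  Nat.sInf_mem (⟨n, hn, closedAt_self σ⟩ : Set.Nonempty {j | 0 < j ∧ closedAt j σ})

lemma minClosed_join {π : Equiv.Perm (Fin k)} (τ : Equiv.Perm (Fin m)) (hk : 0 < k) :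
    minClosed (join π τ) = k ↔ ¬ SumDecomposable π := by
  have h1 : minClosed (join π τ) ≤ k := minClosed_le hk (closedAt_join π τ)
  constructor
  · intro h hdec
    obtain ⟨j, hj0, hjk, hcl⟩ := hdec
    have : closedAt j (join π τ) := (closedAt_join_iff π τ (le_of_lt hjk)).mpr hcl
    have := minClosed_le hj0 this
    omega
  · intro h
    obtain ⟨hpos, hcl⟩ := minClosed_mem (by omega : 0 < k + m) (join π τ)
    by_contra hne
    have hlt : minClosed (join π τ) < k := by omega
    exact h ⟨minClosed (join π τ), hpos, hlt, (closedAt_join_iff π τ h1).mp hcl⟩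


open scoped Classical

lemma tse_zero : twoSidedEulerian 0 = 1 := by
  rw [twoSidedEulerian]
  rw [Finset.univ_unique, Finset.sum_singleton]
  have h1 : des (default : Equiv.Perm (Fin 0)) = 0 := by
    rw [des]
    simp [Finset.univ_eq_empty]
  have h2 : ides (default : Equiv.Perm (Fin 0)) = 0 := by
    rw [ides, des]
    simp [Finset.univ_eq_empty]
  rw [h1, h2]
  simp

lemma fiber (k m : ℕ) (hk : 0 < k) :
    ∑ σ ∈ Finset.univ.filter (fun σ : Equiv.Perm (Fin (k + m)) => minClosed σ = k),
      (X 0 : MvPolynomial (Fin 2) ℤ) ^ des σ * (X 1) ^ ides σ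
    = sumIndecPoly k * twoSidedEulerian m := by
  rw [sumIndecPoly, twoSidedEulerian, Finset.sum_mul_sum, ← Finset.sum_product']
  symm
  apply Finset.sum_bij (fun (p : Equiv.Perm (Fin k) × Equiv.Perm (Fin m)) _ => join p.1 p.2)
  · rintro ⟨π, τ⟩ hp
    simp only [Finset.mem_product, Finset.mem_filter, Finset.mem_univ, true_and] at hp ⊢
    exact (minClosed_join τ hk).mpr hp.1
  · rintro ⟨π, τ⟩ _ ⟨π', τ'⟩ _ h
    obtain ⟨h1, h2⟩ := join_injective h
    exact Prod.ext h1 h2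
  · intro σ hσ
    simp only [Finset.mem_filter, Finset.mem_univ, true_and] at hσ
    obtain ⟨hpos, hcl⟩ := minClosed_mem (by omega : 0 < k + m) σ
    rw [hσ] at hcl
    obtain ⟨π, τ, rfl⟩ := join_surjective hcl
    refine ⟨(π, τ), ?_, rfl⟩
    simp only [Finset.mem_product, Finset.mem_filter, Finset.mem_univ, true_and]
    exact ⟨(minClosed_join τ hk).mp hσ, trivial⟩
  · rintro ⟨π, τ⟩ _
    rw [des_join, ides_join, pow_add, pow_add]
    ring

end Aux

/-- Coefficient form of `F = I⁺ · (1 + F)`: for every `n ≥ 1`,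
`A_n = B⁺_n + Σ_{k=1}^{n-1} B⁺_k A_{n-k}`. -/
theorem stmt14 (n : ℕ) (hn : 1 ≤ n) :
    twoSidedEulerian n =
      sumIndecPoly n + ∑ k ∈ Finset.Ico 1 n, sumIndecPoly k * twoSidedEulerian (n - k) := by
  classical
  have key : twoSidedEulerian n
      = ∑ k ∈ Finset.Icc 1 n, sumIndecPoly k * twoSidedEulerian (n - k) := by
    rw [twoSidedEulerian]
    rw [← Finset.sum_fiberwise_of_maps_to (g := fun σ : Equiv.Perm (Fin n) => Aux.minClosed σ)
      (t := Finset.Icc 1 n) ?hmaps]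
    case hmaps =>
      intro σ _
      obtain ⟨h1, _⟩ := Aux.minClosed_mem (by omega : 0 < n) σ
      have h2 := Aux.minClosed_le (by omega : 0 < n) (Aux.closedAt_self σ)
      exact Finset.mem_Icc.mpr ⟨h1, h2⟩
    apply Finset.sum_congr rfl
    intro k hk
    rw [Finset.mem_Icc] at hk
    obtain ⟨m, rfl⟩ : ∃ m, n = k + m := ⟨n - k, by omega⟩
    have : k + m - k = m := by omega
    rw [this]
    exact Aux.fiber k m (by omega)
  rw [key, ← Finset.Ico_add_one_right_eq_Icc, Finset.sum_Ico_succ_top (by omega : 1 ≤ n)]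
  rw [Nat.sub_self, Aux.tse_zero, mul_one, add_comm]
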